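/- Star-graph evaluation of the variational functional and the phase transition inequality: fix an integer d ≥ 3 and α > 2. Then the supremum, over all vectors (u_0, u_1, …, u_d) with u_i ≥ 0 and u_0 + u_1 + ⋯ + u_d = 1, of 2·(Σ_{i=1}^{d} (u_0 u_i)^{α/(2(α−1))})^{(α−1)/α} equals d^{(α−2)/(2α)}; the supremum is attained at u_0 = 1/2 and u_1 = ⋯ = u_d = 1/(2d). Consequently h_d(α) ≥ d^{(α−2)/(2α)} > 1. -/

import Mathlib

open MeasureTheory ProbabilityTheory Filter Real
open scoped ENNReal NNReal

noncomputable section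

instance matrixMeasurableSpace {m n α : Type*} [MeasurableSpace α] :
    MeasurableSpace (Matrix m n α) :=
  inferInstanceAs (MeasurableSpace (m → n → α))

/-- The largest eigenvalue of a real square matrix: the supremum of its real eigenvalues. -/
def lam1 {n : ℕ} (M : Matrix (Fin n) (Fin n) ℝ) : ℝ :=
  sSup {r : ℝ | ∃ v : Fin n → ℝ, v ≠ 0 ∧ M.mulVec v = r • v}

open Classical in
/-- The sum of `f i j` over the undirected edges `{i, j}` of `G`
(assuming `f` is symmetric, each undirected edge is counted once). -/
def edgeSum {m : ℕ} (G : SimpleGraph (Fin m)) (f : Fin m → Fin m → ℝ) : ℝ :=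
  (∑ i, ∑ j, if G.Adj i j then f i j else 0) / 2

/-- The maximum degree of `G` is at most `d`. -/
def MaxDegLE {m : ℕ} (G : SimpleGraph (Fin m)) (d : ℕ) : Prop :=
  ∀ v, {w | G.Adj v w}.ncard ≤ d

/-- The set of values of the variational functional defining `h_d(α)`, taken over all
finite trees of maximum degree at most `d` and all nonnegative `ℓ¹`-normalized vectors. -/
def hSet (d : ℕ) (α : ℝ) : Set ℝ :=
  {x | ∃ (m : ℕ) (G : SimpleGraph (Fin m)) (u : Fin m → ℝ),
    G.IsTree ∧ MaxDegLE G d ∧ (∀ i, 0 ≤ u i) ∧ (∑ i, u i) = 1 ∧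
    x = (edgeSum G (fun i j => (u i * u j) ^ (α / (2 * (α - 1))))) ^ ((α - 1) / α)}

/-- The law-of-large-numbers constant `h_d(α)`. -/
def hFun (d : ℕ) (α : ℝ) : ℝ := 2 * sSup (hSet d α)


namespace StarGraphAux

lemma rpow_val (d : ℕ) (hd : 3 ≤ d) (α : ℝ) (hα : 2 < α) :
    2 * ((d:ℝ) * ((4*(d:ℝ))⁻¹) ^ (α/(2*(α-1)))) ^ ((α-1)/α) = (d:ℝ) ^ ((α-2)/(2*α)) := by
  have hd0 : (0:ℝ) < d := by exact_mod_cast (by omega : 0 < d)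
  have hα0 : (0:ℝ) < α := by linarith
  have hα1 : (0:ℝ) < α - 1 := by linarith
  have hβe : α/(2*(α-1)) * ((α-1)/α) = 1/2 := by field_simp
  have h4d : (0:ℝ) < 4*(d:ℝ) := by linarith
  rw [Real.mul_rpow hd0.le (by positivity),
    ← Real.rpow_mul (by positivity : (0:ℝ) ≤ (4*(d:ℝ))⁻¹), hβe,
    Real.inv_rpow h4d.le, Real.mul_rpow (by norm_num : (0:ℝ) ≤ 4) hd0.le]
  have h412 : (4:ℝ) ^ ((1:ℝ)/2) = 2 := by
    rw [show (4:ℝ) = 2^(2:ℕ) by norm_num, ← Real.rpow_natCast, ← Real.rpow_mul (by norm_num)]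
    norm_num
  rw [h412]
  have key : (d:ℝ)^((α-1)/α) * ((d:ℝ)^((1:ℝ)/2))⁻¹ = (d:ℝ)^((α-2)/(2*α)) := by
    rw [← Real.rpow_neg hd0.le, ← Real.rpow_add hd0]
    congr 1
    field_simp
    ring
  rw [← key, mul_inv]
  have hpos : (0:ℝ) < (d:ℝ)^((1:ℝ)/2) := Real.rpow_pos_of_pos hd0 _
  field_simp

lemma sum_bound (d : ℕ) (hd : 3 ≤ d) (α : ℝ) (hα : 2 < α) (u : Fin (d+1) → ℝ)
    (hu : ∀ i, 0 ≤ u i) (hsum : ∑ i, u i = 1) :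
    ∑ i : Fin d, (u 0 * u i.succ) ^ (α/(2*(α-1))) ≤ (d:ℝ) * ((4*(d:ℝ))⁻¹) ^ (α/(2*(α-1))) := by
  have hα1 : (0:ℝ) < α - 1 := by linarith
  have hα0 : (0:ℝ) < α := by linarith
  set β := α/(2*(α-1)) with hβ
  have hβpos : 0 < β := by positivity
  have hβle : β ≤ 1 := by rw [hβ, div_le_one (by linarith)]; linarith
  have hd0 : (0:ℝ) < d := by exact_mod_cast (by omega : 0 < d)
  rw [Fin.sum_univ_succ] at hsum
  set S := ∑ i : Fin d, u i.succ with hSdef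
  have hS0 : 0 ≤ S := Finset.sum_nonneg fun i _ => hu _
  have h1 : ∑ i : Fin d, (u 0 * u i.succ) ^ β = (u 0)^β * ∑ i : Fin d, (u i.succ)^β := by
    rw [Finset.mul_sum]; exact Finset.sum_congr rfl fun i _ => Real.mul_rpow (hu 0) (hu _)
  have hp : 1 ≤ 1/β := by rw [le_div_iff₀ hβpos]; linarith
  have jensen := Real.rpow_arith_mean_le_arith_mean_rpow Finset.univ
      (fun _ : Fin d => (d:ℝ)⁻¹) (fun i => (u i.succ)^β)
      (fun i _ => by positivity : ∀ i ∈ Finset.univ, (0:ℝ) ≤ (fun _ : Fin d => (d:ℝ)⁻¹) i)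
      (by simp only [Finset.sum_const, Finset.card_univ, Fintype.card_fin, nsmul_eq_mul]
          field_simp) (fun i _ => Real.rpow_nonneg (hu _) _) hp
  have hRHS : ∑ i : Fin d, (d:ℝ)⁻¹ * ((u i.succ)^β)^(1/β) = (d:ℝ)⁻¹ * S := by
    rw [← Finset.mul_sum]; congr 1
    apply Finset.sum_congr rfl; intro i _
    rw [← Real.rpow_mul (hu _), mul_one_div_cancel hβpos.ne', Real.rpow_one]
  rw [hRHS] at jensen
  have hT0 : 0 ≤ ∑ i : Fin d, (d:ℝ)⁻¹ * (u i.succ)^β :=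
    Finset.sum_nonneg fun i _ => mul_nonneg (by positivity) (Real.rpow_nonneg (hu _) _)
  have h2 : ∑ i : Fin d, (d:ℝ)⁻¹ * (u i.succ)^β ≤ ((d:ℝ)⁻¹ * S)^β := by
    have h := Real.rpow_le_rpow (Real.rpow_nonneg hT0 _) jensen hβpos.le
    rwa [← Real.rpow_mul hT0, one_div_mul_cancel hβpos.ne', Real.rpow_one] at h
  have h3 : ∑ i : Fin d, (u i.succ)^β ≤ (d:ℝ) * ((d:ℝ)⁻¹*S)^β := by
    have heq : ∑ i : Fin d, (u i.succ)^β = (d:ℝ) * ∑ i : Fin d, (d:ℝ)⁻¹ * (u i.succ)^β := by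
      rw [Finset.mul_sum]; apply Finset.sum_congr rfl; intro i _; field_simp
    rw [heq]; exact mul_le_mul_of_nonneg_left h2 hd0.le
  have hu0S : u 0 * S ≤ 1/4 := by nlinarith [hu 0, hS0, sq_nonneg (u 0 - S)]
  have hfinal : u 0 * ((d:ℝ)⁻¹ * S) ≤ (4*(d:ℝ))⁻¹ := by
    have h4 : u 0 * ((d:ℝ)⁻¹ * S) = (u 0 * S) * (d:ℝ)⁻¹ := by ring
    have h5 : (4*(d:ℝ))⁻¹ = (1/4) * (d:ℝ)⁻¹ := by rw [mul_inv]; ring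
    rw [h4, h5]
    exact mul_le_mul_of_nonneg_right hu0S (inv_nonneg.mpr hd0.le)
  calc ∑ i : Fin d, (u 0 * u i.succ) ^ β
      = (u 0)^β * ∑ i : Fin d, (u i.succ)^β := h1
    _ ≤ (u 0)^β * ((d:ℝ) * ((d:ℝ)⁻¹*S)^β) :=
        mul_le_mul_of_nonneg_left h3 (Real.rpow_nonneg (hu 0) _)
    _ = (d:ℝ) * (u 0 * ((d:ℝ)⁻¹*S))^β := by
        rw [Real.mul_rpow (hu 0) (by positivity)]; ring
    _ ≤ (d:ℝ) * ((4*(d:ℝ))⁻¹)^β := by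
        apply mul_le_mul_of_nonneg_left _ hd0.le
        exact Real.rpow_le_rpow (mul_nonneg (hu 0) (mul_nonneg (by positivity) hS0))
          hfinal hβpos.le

def starG (d : ℕ) : SimpleGraph (Fin (d+1)) where
  Adj i j := i ≠ j ∧ (i = 0 ∨ j = 0)
  symm := ⟨fun _ _ h => ⟨h.1.symm, h.2.symm⟩⟩
  loopless := ⟨fun _ h => h.1 rfl⟩

lemma starG_adj {d : ℕ} {i j : Fin (d+1)} :
    (starG d).Adj i j ↔ i ≠ j ∧ (i = 0 ∨ j = 0) := Iff.rfl

lemma starG_conn (d : ℕ) : (starG d).Connected := by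
  rw [SimpleGraph.connected_iff]
  refine ⟨?_, ⟨0⟩⟩
  have key : ∀ w : Fin (d+1), (starG d).Reachable 0 w := by
    intro w
    by_cases hw : w = 0
    · subst hw; exact SimpleGraph.Reachable.refl _
    · exact SimpleGraph.Adj.reachable ⟨Ne.symm hw, Or.inl rfl⟩
  intro u v
  exact (key u).symm.trans (key v)

lemma starG_noCycle0 (d : ℕ) : ∀ (c : (starG d).Walk 0 0), ¬ c.IsCycle := by
  intro c hc
  have h3 := hc.three_le_length
  cases c with
  | nil => exact hc.ne_nil rfl
  | @cons _ x _ h p =>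
    have hx : (0 : Fin (d+1)) ≠ x := h.1
    have hp : p.IsPath := ((SimpleGraph.Walk.cons_isCycle_iff p h).mp hc).1
    cases p with
    | nil => exact hx rfl
    | @cons _ y _ h2 q =>
      obtain rfl : y = 0 := h2.2.resolve_left (fun h0 => hx h0.symm)
      have hq : q = SimpleGraph.Walk.nil :=
        congrArg Subtype.val (SimpleGraph.Path.loop_eq ⟨q, hp.of_cons⟩)
      subst hq
      simp [SimpleGraph.Walk.length_cons] at h3

lemma starG_isTree (d : ℕ) : (starG d).IsTree := by
  refine ⟨starG_conn d, ?_⟩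
  intro v c hc
  have h0 : (0 : Fin (d+1)) ∈ c.support := by
    cases c with
    | nil => exact absurd rfl hc.ne_nil
    | @cons _ x _ h p =>
      rcases h.2 with rfl | h1
      · exact SimpleGraph.Walk.start_mem_support _
      · rw [SimpleGraph.Walk.support_cons]
        exact List.mem_cons_of_mem _ (h1 ▸ p.start_mem_support)
  exact starG_noCycle0 d (c.rotate 0 h0) (hc.rotate h0)

lemma starG_maxdeg (d : ℕ) : MaxDegLE (starG d) d := by
  intro v
  by_cases hv : v = 0
  · subst hv
    have hset : {w | (starG d).Adj 0 w} = {(0:Fin (d+1))}ᶜ := by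
      ext w
      simp only [Set.mem_setOf_eq, starG_adj, Set.mem_compl_iff, Set.mem_singleton_iff]
      constructor
      · rintro ⟨h1, -⟩ h2; exact h1 h2.symm
      · intro h; exact ⟨fun h2 => h h2.symm, by tauto⟩
    rw [hset, Set.ncard_eq_toFinset_card', Set.toFinset_compl, Set.toFinset_singleton,
      Finset.card_compl, Finset.card_singleton, Fintype.card_fin]
    omega
  · have hset : {w | (starG d).Adj v w} = {(0:Fin (d+1))} := by
      ext w
      simp only [Set.mem_setOf_eq, starG_adj, Set.mem_singleton_iff]
      constructor
      · rintro ⟨h1, (h0 | h0)⟩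
        · exact absurd h0 hv
        · exact h0
      · rintro rfl; exact ⟨fun h => hv h, by tauto⟩
    rw [hset, Set.ncard_singleton]
    omega

open Classical in
lemma starG_edgeSum (d : ℕ) (f : Fin (d+1) → Fin (d+1) → ℝ) (hf : ∀ i j, f i j = f j i) :
    edgeSum (starG d) f = ∑ i : Fin d, f 0 i.succ := by
  unfold edgeSum
  rw [Fin.sum_univ_succ]
  have h1 : ∑ j, (if (starG d).Adj 0 j then f 0 j else 0) = ∑ i : Fin d, f 0 i.succ := by
    rw [Fin.sum_univ_succ, if_neg ((starG d).irrefl), zero_add]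
    apply Finset.sum_congr rfl
    intro i _
    have hadj : (starG d).Adj 0 i.succ := ⟨(Fin.succ_ne_zero i).symm, Or.inl rfl⟩
    rw [if_pos hadj]
  have h2 : ∀ k : Fin d, ∑ j, (if (starG d).Adj k.succ j then f k.succ j else 0) = f 0 k.succ := by
    intro k
    have hadj : (starG d).Adj k.succ 0 := ⟨Fin.succ_ne_zero k, Or.inr rfl⟩
    rw [Fin.sum_univ_succ, if_pos hadj]
    have hz : ∀ j : Fin d, (if (starG d).Adj k.succ j.succ then f k.succ j.succ else 0) = 0 := by
      intro j
      rw [if_neg]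
      rintro ⟨-, (h | h)⟩ <;> exact Fin.succ_ne_zero _ h
    rw [Finset.sum_congr rfl (fun j _ => hz j), Finset.sum_const_zero, add_zero, hf]
  rw [h1, Finset.sum_congr rfl (fun k _ => h2 k)]
  ring

open Classical in
lemma hSet_le (d : ℕ) (hd : 3 ≤ d) (α : ℝ) (hα : 2 < α) : ∀ x ∈ hSet d α, x ≤ (d:ℝ) := by
  rintro x ⟨m, G, u, -, hdeg, hnn, hsum, rfl⟩
  have hα1 : (0:ℝ) < α - 1 := by linarith
  have hα0 : (0:ℝ) < α := by linarith
  set β := α / (2 * (α - 1)) with hβ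
  have hβpos : 0 < β := by positivity
  have h2β : 1 ≤ β * 2 := by
    rw [hβ]; rw [div_mul_eq_mul_div, le_div_iff₀ (by linarith)]; linarith
  have hd0 : (0:ℝ) < d := by exact_mod_cast (by omega : 0 < d)
  set w : Fin m → ℝ := fun i => (u i) ^ β with hw
  have hwnn : ∀ i, 0 ≤ w i := fun i => Real.rpow_nonneg (hnn i) _
  have hw2 : ∀ i, w i ^ 2 ≤ u i := by
    intro i
    have hui1 : u i ≤ 1 := by
      rw [← hsum]
      exact Finset.single_le_sum (fun j _ => hnn j) (Finset.mem_univ i)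
    have : w i ^ 2 = (u i) ^ (β * 2) := by
      rw [hw, ← Real.rpow_natCast ((u i) ^ β) 2, ← Real.rpow_mul (hnn i)]
      norm_num
    rw [this]
    rcases eq_or_lt_of_le (hnn i) with h0 | h0
    · rw [← h0, Real.zero_rpow (by positivity : β * 2 ≠ 0)]
    · calc (u i) ^ (β * 2) ≤ (u i) ^ (1:ℝ) :=
            Real.rpow_le_rpow_of_exponent_ge h0 hui1 h2β
        _ = u i := Real.rpow_one _
  have hcard : ∀ i, ((Finset.univ.filter (fun j => G.Adj i j)).card : ℝ) ≤ d := by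
    intro i
    have h := hdeg i
    rw [Set.ncard_eq_toFinset_card', Set.toFinset_setOf] at h
    exact_mod_cast h
  have key : ∀ i j, (if G.Adj i j then (u i * u j) ^ β else 0)
      ≤ (if G.Adj i j then w i ^ 2 / 2 else 0) + (if G.Adj i j then w j ^ 2 / 2 else 0) := by
    intro i j
    by_cases h : G.Adj i j
    · simp only [if_pos h]
      rw [Real.mul_rpow (hnn i) (hnn j)]
      nlinarith [sq_nonneg (w i - w j), hwnn i, hwnn j]
    · simp [if_neg h]
  have hsq : ∑ i, w i ^ 2 ≤ 1 := by
    rw [← hsum]; exact Finset.sum_le_sum fun i _ => hw2 i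
  have hpiece : ∀ i : Fin m, ∑ j, (if G.Adj i j then w i ^ 2 / 2 else 0) ≤ (d:ℝ) * (w i ^ 2 / 2) := by
    intro i
    rw [Finset.sum_ite, Finset.sum_const, Finset.sum_const_zero, add_zero, nsmul_eq_mul]
    apply mul_le_mul_of_nonneg_right (hcard i) (by positivity)
  have hpiece2 : ∑ i, ∑ j, (if G.Adj i j then w j ^ 2 / 2 else 0)
      = ∑ i, ∑ j, (if G.Adj i j then w i ^ 2 / 2 else 0) := by
    rw [Finset.sum_comm]
    apply Finset.sum_congr rfl; intro i _
    apply Finset.sum_congr rfl; intro j _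
    congr 1
    simp [G.adj_comm]
  have hA : ∑ i, ∑ j, (if G.Adj i j then (u i * u j) ^ β else 0) ≤ (d:ℝ) := by
    calc ∑ i, ∑ j, (if G.Adj i j then (u i * u j) ^ β else 0)
        ≤ ∑ i, ∑ j, ((if G.Adj i j then w i ^ 2 / 2 else 0)
            + (if G.Adj i j then w j ^ 2 / 2 else 0)) := by
          apply Finset.sum_le_sum; intro i _
          apply Finset.sum_le_sum; intro j _
          exact key i j
      _ = (∑ i, ∑ j, (if G.Adj i j then w i ^ 2 / 2 else 0))
          + ∑ i, ∑ j, (if G.Adj i j then w j ^ 2 / 2 else 0) := by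
          rw [← Finset.sum_add_distrib]
          apply Finset.sum_congr rfl; intro i _
          rw [← Finset.sum_add_distrib]
      _ = 2 * ∑ i, ∑ j, (if G.Adj i j then w i ^ 2 / 2 else 0) := by rw [hpiece2]; ring
      _ ≤ 2 * ∑ i, (d:ℝ) * (w i ^ 2 / 2) := by
          apply mul_le_mul_of_nonneg_left _ (by norm_num)
          exact Finset.sum_le_sum fun i _ => hpiece i
      _ = (d:ℝ) * ∑ i, w i ^ 2 := by
          rw [Finset.mul_sum, Finset.mul_sum]
          apply Finset.sum_congr rfl; intro i _; ring
      _ ≤ (d:ℝ) * 1 := mul_le_mul_of_nonneg_left hsq hd0.le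
      _ = (d:ℝ) := mul_one _
  have hE0 : 0 ≤ edgeSum G (fun i j => (u i * u j) ^ β) := by
    unfold edgeSum
    apply div_nonneg _ (by norm_num)
    apply Finset.sum_nonneg; intro i _
    apply Finset.sum_nonneg; intro j _
    split
    · exact Real.rpow_nonneg (mul_nonneg (hnn i) (hnn j)) _
    · exact le_refl 0
  have hE : edgeSum G (fun i j => (u i * u j) ^ β) ≤ (d:ℝ) / 2 := by
    unfold edgeSum
    linarith [hA]
  have he1 : (α - 1) / α ≤ 1 := by
    rw [div_le_one hα0]; linarith
  have hd2 : (1:ℝ) ≤ (d:ℝ)/2 := by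
    rw [le_div_iff₀ (by norm_num)]
    have hd3 : (3:ℝ) ≤ d := by exact_mod_cast hd
    linarith
  calc (edgeSum G (fun i j => (u i * u j) ^ β)) ^ ((α-1)/α)
      ≤ ((d:ℝ)/2) ^ ((α-1)/α) := Real.rpow_le_rpow hE0 hE (by positivity)
    _ ≤ ((d:ℝ)/2) ^ (1:ℝ) := Real.rpow_le_rpow_of_exponent_le hd2 he1
    _ = (d:ℝ)/2 := Real.rpow_one _
    _ ≤ (d:ℝ) := by linarith

end StarGraphAux

open StarGraphAux in
/-- **Star-graph evaluation of the variational functional and the phase transition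
inequality**, for `α > 2`. -/
theorem star_graph_functional
    (d : ℕ) (hd : 3 ≤ d) (α : ℝ) (hα : 2 < α) :
    IsGreatest {x : ℝ | ∃ u : Fin (d + 1) → ℝ, (∀ i, 0 ≤ u i) ∧ (∑ i, u i) = 1 ∧
        x = 2 * (∑ i : Fin d, (u 0 * u i.succ) ^ (α / (2 * (α - 1)))) ^ ((α - 1) / α)}
      ((d : ℝ) ^ ((α - 2) / (2 * α))) ∧
    2 * (∑ _i : Fin d, ((1 / 2 : ℝ) * (1 / (2 * (d : ℝ)))) ^ (α / (2 * (α - 1)))) ^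
        ((α - 1) / α) = (d : ℝ) ^ ((α - 2) / (2 * α)) ∧
    (d : ℝ) ^ ((α - 2) / (2 * α)) ≤ hFun d α ∧
    1 < (d : ℝ) ^ ((α - 2) / (2 * α)) := by
  have hα1 : (0:ℝ) < α - 1 := by linarith
  have hα0 : (0:ℝ) < α := by linarith
  have hd0 : (0:ℝ) < d := by exact_mod_cast (by omega : 0 < d)
  have hdne : (d:ℝ) ≠ 0 := hd0.ne'
  have hc : ((1/2:ℝ) * (1/(2*(d:ℝ)))) = (4*(d:ℝ))⁻¹ := by
    field_simp
    ring
  have hval : 2 * (∑ _i : Fin d, ((1 / 2 : ℝ) * (1 / (2 * (d : ℝ)))) ^ (α / (2 * (α - 1)))) ^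
      ((α - 1) / α) = (d : ℝ) ^ ((α - 2) / (2 * α)) := by
    rw [hc, Finset.sum_const, Finset.card_univ, Fintype.card_fin, nsmul_eq_mul]
    exact rpow_val d hd α hα
  set ustar : Fin (d+1) → ℝ := fun i => if i = 0 then (1/2:ℝ) else 1/(2*(d:ℝ)) with hustar
  have hustar0 : ustar 0 = 1/2 := if_pos rfl
  have hustar_succ : ∀ i : Fin d, ustar i.succ = 1/(2*(d:ℝ)) :=
    fun i => if_neg (Fin.succ_ne_zero i)
  have hustar_nn : ∀ i, 0 ≤ ustar i := by
    intro i
    rw [hustar]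
    dsimp only
    split
    · norm_num
    · positivity
  have hustar_sum : ∑ i, ustar i = 1 := by
    rw [Fin.sum_univ_succ, hustar0,
      Finset.sum_congr rfl (fun i _ => hustar_succ i), Finset.sum_const,
      Finset.card_univ, Fintype.card_fin, nsmul_eq_mul]
    field_simp
    ring
  have hsum_star : ∑ i : Fin d, (ustar 0 * ustar i.succ) ^ (α / (2 * (α - 1)))
      = ∑ _i : Fin d, ((1/2:ℝ) * (1/(2*(d:ℝ)))) ^ (α / (2 * (α - 1))) :=
    Finset.sum_congr rfl fun i _ => by rw [hustar0, hustar_succ]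
  have mem1 : (d : ℝ) ^ ((α - 2) / (2 * α)) ∈ {x : ℝ | ∃ u : Fin (d + 1) → ℝ,
      (∀ i, 0 ≤ u i) ∧ (∑ i, u i) = 1 ∧
      x = 2 * (∑ i : Fin d, (u 0 * u i.succ) ^ (α / (2 * (α - 1)))) ^ ((α - 1) / α)} := by
    refine ⟨ustar, hustar_nn, hustar_sum, ?_⟩
    rw [hsum_star]
    exact hval.symm
  have ub : ∀ x ∈ {x : ℝ | ∃ u : Fin (d + 1) → ℝ, (∀ i, 0 ≤ u i) ∧ (∑ i, u i) = 1 ∧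
      x = 2 * (∑ i : Fin d, (u 0 * u i.succ) ^ (α / (2 * (α - 1)))) ^ ((α - 1) / α)},
      x ≤ (d : ℝ) ^ ((α - 2) / (2 * α)) := by
    rintro x ⟨u, hnn, hsum, rfl⟩
    have hb := sum_bound d hd α hα u hnn hsum
    have h0 : 0 ≤ ∑ i : Fin d, (u 0 * u i.succ) ^ (α / (2 * (α - 1))) :=
      Finset.sum_nonneg fun i _ => Real.rpow_nonneg (mul_nonneg (hnn 0) (hnn _)) _
    calc 2 * (∑ i : Fin d, (u 0 * u i.succ) ^ (α / (2 * (α - 1)))) ^ ((α - 1) / α)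
        ≤ 2 * ((d:ℝ) * ((4*(d:ℝ))⁻¹) ^ (α/(2*(α-1)))) ^ ((α - 1) / α) := by
          apply mul_le_mul_of_nonneg_left
            (Real.rpow_le_rpow h0 hb (by positivity)) (by norm_num)
      _ = (d : ℝ) ^ ((α - 2) / (2 * α)) := rpow_val d hd α hα
  refine ⟨⟨mem1, ub⟩, hval, ?_, ?_⟩
  · -- h_d(α) ≥ d^((α-2)/(2α))
    have memh : (∑ _i : Fin d, ((1/2:ℝ) * (1/(2*(d:ℝ)))) ^ (α / (2 * (α - 1)))) ^ ((α - 1) / α)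
        ∈ hSet d α := by
      refine ⟨d+1, starG d, ustar, starG_isTree d, starG_maxdeg d, hustar_nn, hustar_sum, ?_⟩
      congr 1
      rw [starG_edgeSum d _ (fun i j => by rw [mul_comm (ustar i) (ustar j)])]
      exact (hsum_star.symm).trans (Finset.sum_congr rfl fun i _ => rfl)
    have hbdd : BddAbove (hSet d α) := ⟨(d:ℝ), fun x hx => hSet_le d hd α hα x hx⟩
    have hle := le_csSup hbdd memh
    rw [← hval]
    unfold hFun
    linarith
  · rw [Real.one_lt_rpow_iff_of_pos hd0]
    left
    constructor
    · exact_mod_cast (by omega : 1 < d)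
    · exact div_pos (by linarith) (by linarith)
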